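/- Let n ≥ 1 and let d = (d_0,…,d_n) and e = (e_0,…,e_n) be strictly increasing tuples of integers. Fix an index i with 0 ≤ i < n such that d_i = e_i and d_{i+1} = e_{i+1}. If d_k ≤ e_k for every k and d ≠ e, then (∏_{k≠i+1} |d_{i+1} − d_k|)·(∏_{k≠i} |e_i − e_k|) < (∏_{k≠i+1} |e_{i+1} − e_k|)·(∏_{k≠i} |d_i − d_k|); equivalently, β_i(π_d)/β_{i+1}(π_d) < β_i(π_e)/β_{i+1}(π_e) as positive rationals. -/

import Mathlib

open Finset

theorem strictAux' {n : ℕ} (d : Fin (n + 1) → ℤ)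
    (hd : ∀ k : ℕ, (hk : k + 1 ≤ n) → d ⟨k, Nat.lt_succ_of_lt hk⟩ + 1 ≤ d ⟨k + 1, Nat.succ_lt_succ hk⟩) :
    ∀ k : ℕ, (hk : k ≤ n) → ∀ j : ℕ, (hj : j < k) →
      d ⟨j, Nat.lt_succ_of_le (Nat.le_trans (Nat.le_of_lt hj) hk)⟩ < d ⟨k, Nat.lt_succ_of_le hk⟩ := by
  intro k
  induction k with
  | zero => intro _ j hj; omega
  | succ m ih =>
    intro hk j hj
    have h1 : d ⟨m, by omega⟩ + 1 ≤ d ⟨m + 1, by omega⟩ := hd m hk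
    rcases Nat.lt_or_ge j m with h | h
    · have := ih (by omega) j h
      omega
    · have : j = m := by omega
      subst this; omega

theorem monotonicity_aux {n : ℕ}
    (d e : Fin (n + 1) → ℤ)
    (hdm : ∀ j k : Fin (n + 1), (j : ℕ) < (k : ℕ) → d j < d k)
    (hem : ∀ j k : Fin (n + 1), (j : ℕ) < (k : ℕ) → e j < e k)
    (I I1 : Fin (n + 1)) (hII1 : (I1 : ℕ) = (I : ℕ) + 1)
    (hdei : d I = e I) (hdei1 : d I1 = e I1)
    (hle : ∀ k, d k ≤ e k) (hne : d ≠ e) :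
    (∏ k ∈ Finset.univ.filter (fun k => k ≠ I1), |d I1 - d k|) *
      (∏ k ∈ Finset.univ.filter (fun k => k ≠ I), |e I - e k|) <
    (∏ k ∈ Finset.univ.filter (fun k => k ≠ I1), |e I1 - e k|) *
      (∏ k ∈ Finset.univ.filter (fun k => k ≠ I), |d I - d k|) := by
  classical
  set a : ℤ := d I with ha
  set b : ℤ := d I1 with hb
  have hab : a < b := hdm I I1 (by omega)
  have hne' : I ≠ I1 := by intro h; apply absurd (congrArg Fin.val h); omega
  set S : Finset (Fin (n + 1)) :=
    Finset.univ.filter (fun k => k ≠ I ∧ k ≠ I1) with hS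
  have hA : Finset.univ.filter (fun k => k ≠ I1) = insert I S := by
    ext x
    simp only [hS, mem_filter, mem_insert, mem_univ, true_and]
    constructor
    · intro h; by_cases hx : x = I <;> tauto
    · rintro (rfl | ⟨h1, h2⟩)
      · exact hne'
      · exact h2
  have hB : Finset.univ.filter (fun k => k ≠ I) = insert I1 S := by
    ext x
    simp only [hS, mem_filter, mem_insert, mem_univ, true_and]
    constructor
    · intro h; by_cases hx : x = I1 <;> tauto
    · rintro (rfl | ⟨h1, h2⟩)
      · exact fun h => hne' h.symm
      · exact h1
  have hIS : I ∉ S := by simp [hS]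
  have hI1S : I1 ∉ S := by simp [hS]
  rw [hA, hB, prod_insert hIS, prod_insert hI1S, prod_insert hIS, prod_insert hI1S]
  have heI : e I = a := hdei.symm
  have heI1 : e I1 = b := hdei1.symm
  rw [heI, heI1, ← hb, ← ha]
  have h1 : |b - a| = b - a := abs_of_pos (by omega)
  have h2 : |a - b| = b - a := by rw [abs_sub_comm]; exact h1
  rw [h1, h2]
  have hpos : ∀ k ∈ S, (k : ℕ) < (I : ℕ) ∨ (I1 : ℕ) < (k : ℕ) := by
    intro k hk
    simp only [hS, mem_filter] at hk
    have h1 : (k : ℕ) ≠ (I : ℕ) := fun h => hk.2.1 (Fin.ext h)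
    have h2 : (k : ℕ) ≠ (I1 : ℕ) := fun h => hk.2.2 (Fin.ext h)
    omega
  have key : ∀ k ∈ S, |b - d k| * |a - e k| + (b - a) * (e k - d k)
      = |b - e k| * |a - d k| := by
    intro k hk
    rcases hpos k hk with h | h
    · have h1 : d k < a := hdm k I h
      have h2 : e k < a := by rw [← heI]; exact hem k I h
      rw [abs_of_pos (by omega : (0:ℤ) < b - d k), abs_of_pos (by omega : (0:ℤ) < a - e k),
        abs_of_pos (by omega : (0:ℤ) < b - e k), abs_of_pos (by omega : (0:ℤ) < a - d k)]
      ring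
    · have h1 : b < d k := hdm I1 k h
      have h2 : b < e k := by rw [← heI1]; exact hem I1 k h
      rw [abs_of_neg (by omega : b - d k < (0:ℤ)), abs_of_neg (by omega : a - e k < (0:ℤ)),
        abs_of_neg (by omega : b - e k < (0:ℤ)), abs_of_neg (by omega : a - d k < (0:ℤ))]
      ring
  have hfpos : ∀ k ∈ S, 0 < |b - d k| * |a - e k| := by
    intro k hk
    rcases hpos k hk with h | h
    · have h1 : d k < a := hdm k I h
      have h2 : e k < a := by rw [← heI]; exact hem k I h
      exact mul_pos (abs_pos.2 (by omega)) (abs_pos.2 (by omega))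
    · have h1 : b < d k := hdm I1 k h
      have h2 : b < e k := by rw [← heI1]; exact hem I1 k h
      exact mul_pos (abs_pos.2 (by omega)) (abs_pos.2 (by omega))
  obtain ⟨k0, hk0⟩ : ∃ k0, d k0 ≠ e k0 := by
    by_contra h
    push_neg at h
    exact hne (funext h)
  have hk0lt : d k0 < e k0 := lt_of_le_of_ne (hle k0) hk0
  have hk0S : k0 ∈ S := by
    simp only [hS, mem_filter, mem_univ, true_and]
    constructor
    · rintro rfl; exact hk0 hdei
    · rintro rfl; exact hk0 hdei1
  have hprod : ∏ k ∈ S, |b - d k| * |a - e k| < ∏ k ∈ S, |b - e k| * |a - d k| := by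
    refine Finset.prod_lt_prod hfpos (fun k hk => ?_) ⟨k0, hk0S, ?_⟩
    · rw [← key k hk]
      have : 0 ≤ (b - a) * (e k - d k) := mul_nonneg (by omega) (by have := hle k; omega)
      omega
    · rw [← key k0 hk0S]
      have : 0 < (b - a) * (e k0 - d k0) := mul_pos (by omega) (by omega)
      omega
  calc ((b - a) * ∏ k ∈ S, |b - d k|) * ((b - a) * ∏ k ∈ S, |a - e k|)
      = (b - a) * (b - a) * ∏ k ∈ S, |b - d k| * |a - e k| := by
        rw [Finset.prod_mul_distrib]; ring
    _ < (b - a) * (b - a) * ∏ k ∈ S, |b - e k| * |a - d k| := by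
        apply mul_lt_mul_of_pos_left hprod
        exact mul_pos (by omega) (by omega)
    _ = ((b - a) * ∏ k ∈ S, |b - e k|) * ((b - a) * ∏ k ∈ S, |a - d k|) := by
        rw [Finset.prod_mul_distrib]; ring

/-- **Monotonicity Principle** for finite (integer) degree sequences, in cross-multiplied
form.  If `d, e : Fin (n+1) → ℤ` are strictly increasing tuples agreeing in positions `i`
and `i + 1`, with `d_k ≤ e_k` for all `k` and `d ≠ e`, then
`(∏_{k≠i+1} |d_{i+1} − d_k|)·(∏_{k≠i} |e_i − e_k|) <
 (∏_{k≠i+1} |e_{i+1} − e_k|)·(∏_{k≠i} |d_i − d_k|)`,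
which is equivalent to `β_i(π_d)/β_{i+1}(π_d) < β_i(π_e)/β_{i+1}(π_e)`. -/
theorem monotonicity_principle_int {n : ℕ} (hn : 1 ≤ n)
    (d e : Fin (n + 1) → ℤ)
    (hd : ∀ k : ℕ, (hk : k + 1 ≤ n) → d ⟨k, by omega⟩ + 1 ≤ d ⟨k + 1, by omega⟩)
    (he : ∀ k : ℕ, (hk : k + 1 ≤ n) → e ⟨k, by omega⟩ + 1 ≤ e ⟨k + 1, by omega⟩)
    (i : ℕ) (hi : i < n)
    (hdei : d ⟨i, by omega⟩ = e ⟨i, by omega⟩)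
    (hdei1 : d ⟨i + 1, by omega⟩ = e ⟨i + 1, by omega⟩)
    (hle : ∀ k, d k ≤ e k) (hne : d ≠ e) :
    (∏ k ∈ Finset.univ.filter (fun k => k ≠ (⟨i + 1, by omega⟩ : Fin (n + 1))),
        |d ⟨i + 1, by omega⟩ - d k|) *
      (∏ k ∈ Finset.univ.filter (fun k => k ≠ (⟨i, by omega⟩ : Fin (n + 1))),
        |e ⟨i, by omega⟩ - e k|) <
    (∏ k ∈ Finset.univ.filter (fun k => k ≠ (⟨i + 1, by omega⟩ : Fin (n + 1))),
        |e ⟨i + 1, by omega⟩ - e k|) *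
      (∏ k ∈ Finset.univ.filter (fun k => k ≠ (⟨i, by omega⟩ : Fin (n + 1))),
        |d ⟨i, by omega⟩ - d k|) := by
  have hdm : ∀ j k : Fin (n + 1), (j : ℕ) < (k : ℕ) → d j < d k := by
    intro j k h
    have := strictAux' d hd k.1 (by omega) j.1 h
    simpa using this
  have hem : ∀ j k : Fin (n + 1), (j : ℕ) < (k : ℕ) → e j < e k := by
    intro j k h
    have := strictAux' e he k.1 (by omega) j.1 h
    simpa using this
  exact monotonicity_aux d e hdm hem ⟨i, by omega⟩ ⟨i + 1, by omega⟩ rfl hdei hdei1 hle hne
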